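/- Let S_n(t) satisfy S_0 = 1, S_1(t) = [1 - q(1+q)c(q,1)/t]/(1-q) and the recurrence S_n(t) = (1-q^{n+1}) S_{n+1}(q^2 t) + (1+q) c(q,n)(qt)^{-1} S_n(t) + q d(q,n) t^{-2} S_{n-1}(q^{-2} t), with |c(q,n)| \leq K, |d(q,n)| \leq K^2, K \geq 1. Let f^b be the solution with f^b(\infty)=1 of the a=-1 functional equation f(z) = f(zq^2) - (q/z^2) f(zq^{-2}) - ((1+q)/(qz)) f(z), whose expansion in 1/z has positive coefficients. Then for all |t| \geq 1 and n \geq 0, |S_n(t)| \leq f^b(|t|/K) / \prod_{k=1}^n (1-q^k). -/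

import Mathlib

/-- The functions `S_n` defined by `S_0 = 1`,
`S_1(t) = [1 - q(1+q)c(q,1)/t]/(1-q)` and the recurrence
`S_n(t) = (1-q^{n+1}) S_{n+1}(q²t) + (1+q)c(q,n)(qt)⁻¹ S_n(t) + q d(q,n) t⁻² S_{n-1}(q^{-2}t)`,
written in solved form
`S_{n+1}(u) = [(1 - (1+q)c(q,n) q/u) S_n(q^{-2}u) - q⁵ d(q,n) u⁻² S_{n-1}(q^{-4}u)]/(1-q^{n+1})`. -/
noncomputable def SFun (q : ℝ) (c d : ℕ → ℂ) : ℕ → ℂ → ℂ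
  | 0 => fun _ => 1
  | 1 => fun t => (1 - (q : ℂ) * (1 + (q : ℂ)) * c 1 / t) / (1 - (q : ℂ))
  | (n + 2) => fun u =>
      ((1 - (1 + (q : ℂ)) * c (n + 1) * (q : ℂ) / u)
          * SFun q c d (n + 1) (((q : ℂ) ^ 2)⁻¹ * u)
        - (q : ℂ) ^ 5 * d (n + 1) / u ^ 2 * SFun q c d n (((q : ℂ) ^ 4)⁻¹ * u))
        / (1 - (q : ℂ) ^ (n + 2))

/-- with `|c(q,n)| ≤ K`, `|d(q,n)| ≤ K²`, `K ≥ 1`, and `f^b` the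
solution with `f^b(∞) = 1` of the `a = -1` functional equation
`f(z) = f(zq²) - (q/z²) f(zq^{-2}) - ((1+q)/(qz)) f(z)`, whose expansion in `1/z`
has positive coefficients, one has `|S_n(t)| ≤ f^b(|t|/K)/∏_{k=1}^n (1-q^k)` for all
`|t| ≥ 1` and `n ≥ 0`. -/
theorem SFun_bound (q : ℝ) (hq0 : 0 < q) (hq1 : q < 1) (K : ℝ) (hK : 1 ≤ K)
    (c d : ℕ → ℂ) (hc : ∀ n, ‖c n‖ ≤ K) (hd : ∀ n, ‖d n‖ ≤ K ^ 2)
    (fb : ℝ → ℝ) (fcoef : ℕ → ℝ) (hf0 : fcoef 0 = 1) (hfpos : ∀ n, 0 < fcoef n)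
    (hfsum : ∀ x : ℝ, x ≠ 0 → HasSum (fun n : ℕ => fcoef n / x ^ n) (fb x))
    (hfeq : ∀ x : ℝ, 0 < x →
      fb x = fb (x * q ^ 2) - q / x ^ 2 * fb (x / q ^ 2) - (1 + q) / (q * x) * fb x) :
    ∀ t : ℂ, 1 ≤ ‖t‖ → ∀ n : ℕ,
      ‖SFun q c d n t‖ ≤
        fb (‖t‖ / K) / ∏ k ∈ Finset.range n, (1 - q ^ (k + 1)) := by
  have hK0 : (0:ℝ) < K := lt_of_lt_of_le one_pos hK
  -- fb ≥ 1 on positives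
  have hfb1 : ∀ x : ℝ, 0 < x → 1 ≤ fb x := by
    intro x hx
    have hs := hfsum x hx.ne'
    have h := le_hasSum hs 0 (fun j _ => div_nonneg (hfpos j).le (pow_nonneg hx.le j))
    simpa [hf0] using h
  -- key identity
  have key : ∀ x : ℝ, 0 < x →
      fb (x / K) = (1 + (1+q)*q*K/x) * fb ((q^2)⁻¹ * x / K)
        + q^5*K^2/x^2 * fb ((q^4)⁻¹ * x / K) := by
    intro x hx0
    have hq2 : (0:ℝ) < q^2 := by positivity
    have hx₀ : 0 < (q^2)⁻¹ * x / K := by positivity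
    have h := hfeq _ hx₀
    have e1 : (q^2)⁻¹ * x / K * q^2 = x / K := by field_simp
    have e2 : (q^2)⁻¹ * x / K / q^2 = (q^4)⁻¹ * x / K := by
      rw [show (q^4:ℝ)⁻¹ = (q^2)⁻¹ / q^2 by
        rw [div_eq_mul_inv, ← mul_inv, ← pow_add]]
      ring
    rw [e1, e2] at h
    have c1 : (1+q)/(q*((q^2)⁻¹ * x / K)) = (1+q)*q*K/x := by
      field_simp
    have c2 : q/((q^2)⁻¹ * x / K)^2 = q^5*K^2/x^2 := by
      field_simp
    rw [c1, c2] at h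
    linear_combination -h
  -- products
  have hA : ∀ n : ℕ, 0 < ∏ k ∈ Finset.range n, (1 - q^(k+1)) := by
    intro n
    apply Finset.prod_pos
    intro k _
    have : q^(k+1) < 1 := pow_lt_one₀ hq0.le hq1 (Nat.succ_ne_zero k)
    linarith
  have hAle : ∀ n : ℕ, ∏ k ∈ Finset.range (n+1), (1 - q^(k+1))
      ≤ ∏ k ∈ Finset.range n, (1 - q^(k+1)) := by
    intro n
    rw [Finset.prod_range_succ]
    have h1 : q^(n+1) < 1 := pow_lt_one₀ hq0.le hq1 (Nat.succ_ne_zero n)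
    have h2 : 0 < q^(n+1) := by positivity
    nlinarith [hA n]
  have habsq : ‖(q:ℂ)‖ = q := by
    rw [Complex.norm_real, Real.norm_eq_abs]; exact abs_of_pos hq0
  have habs1q : ‖1 + (q:ℂ)‖ = 1 + q := by
    rw [show (1:ℂ) + (q:ℂ) = ((1+q:ℝ):ℂ) by push_cast; ring, Complex.norm_real, Real.norm_eq_abs]
    exact abs_of_pos (by linarith)
  suffices h : ∀ n : ℕ, ∀ t : ℂ, 1 ≤ ‖t‖ →
      ‖SFun q c d n t‖ ≤
        fb (‖t‖ / K) / ∏ k ∈ Finset.range n, (1 - q ^ (k + 1)) by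
    intro t ht n; exact h n t ht
  intro n
  induction n using Nat.strong_induction_on with
  | _ n ih =>
    match n, ih with
    | 0, _ =>
      intro t ht
      have hx0 : (0:ℝ) < ‖t‖ := lt_of_lt_of_le one_pos ht
      have : SFun q c d 0 t = 1 := rfl
      rw [this]
      simp only [norm_one, Finset.prod_range_zero, div_one]
      exact hfb1 _ (div_pos hx0 hK0)
    | 1, _ =>
      intro t ht
      set x := ‖t‖ with hxdef
      have hx0 : (0:ℝ) < x := lt_of_lt_of_le one_pos ht
      have hS : SFun q c d 1 t = (1 - (q:ℂ) * (1 + (q:ℂ)) * c 1 / t) / (1 - (q:ℂ)) := rfl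
      rw [hS, norm_div]
      have hden : ‖1 - (q:ℂ)‖ = 1 - q := by
        rw [show (1:ℂ) - (q:ℂ) = ((1-q:ℝ):ℂ) by push_cast; ring, Complex.norm_real, Real.norm_eq_abs]
        exact abs_of_pos (by linarith)
      rw [hden]
      have hw : ‖(q:ℂ) * (1 + (q:ℂ)) * c 1 / t‖ ≤ q*(1+q)*K/x := by
        rw [norm_div, norm_mul, norm_mul, habsq, habs1q, ← hxdef]
        gcongr
        exact hc 1
      have htri : ‖1 - (q:ℂ) * (1 + (q:ℂ)) * c 1 / t‖
          ≤ 1 + q*(1+q)*K/x := by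
        calc ‖1 - (q:ℂ) * (1 + (q:ℂ)) * c 1 / t‖
            ≤ ‖(1:ℂ)‖ + ‖(q:ℂ) * (1 + (q:ℂ)) * c 1 / t‖ := by
              simpa only using norm_sub_le (1:ℂ) ((q:ℂ) * (1 + (q:ℂ)) * c 1 / t)
          _ ≤ 1 + q*(1+q)*K/x := by rw [norm_one]; linarith
      have hfx : 1 + q*(1+q)*K/x ≤ fb (x / K) := by
        have hkey := key x hx0
        have hq2 : (0:ℝ) < q^2 := by positivity
        have hF1 : 1 ≤ fb ((q^2)⁻¹ * x / K) := hfb1 _ (by positivity)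
        have hF2 : 1 ≤ fb ((q^4)⁻¹ * x / K) := hfb1 _ (by positivity)
        have hb : (0:ℝ) < q^5*K^2/x^2 := by positivity
        have ha : (0:ℝ) ≤ (1+q)*q*K/x := by positivity
        have h1 : 1 + (1+q)*q*K/x ≤ (1 + (1+q)*q*K/x) * fb ((q^2)⁻¹ * x / K) :=
          le_mul_of_one_le_right (by positivity) hF1
        have h2 : (0:ℝ) ≤ q^5*K^2/x^2 * fb ((q^4)⁻¹ * x / K) :=
          mul_nonneg hb.le (by linarith)
        have harg : q*(1+q)*K/x = (1+q)*q*K/x := by ring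
        rw [harg]
        linarith
      have hprod : ∏ k ∈ Finset.range 1, (1 - q^(k+1)) = 1 - q := by
        simp
      rw [hprod]
      have h1q : (0:ℝ) < 1 - q := by linarith
      exact (div_le_div_iff_of_pos_right h1q).mpr (htri.trans hfx)
    | (m+2), ih =>
      intro t ht
      set x := ‖t‖ with hxdef
      have hx0 : (0:ℝ) < x := lt_of_lt_of_le one_pos ht
      have hq2 : (0:ℝ) < q^2 := by positivity
      have hq4 : (0:ℝ) < q^4 := by positivity
      have hq2le : q^2 ≤ 1 := by nlinarith
      have hq4le : q^4 ≤ 1 := by nlinarith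
      have ht1 : ‖((q:ℂ)^2)⁻¹ * t‖ = (q^2)⁻¹ * x := by
        rw [norm_mul, norm_inv, norm_pow, habsq, ← hxdef]
      have ht2 : ‖((q:ℂ)^4)⁻¹ * t‖ = (q^4)⁻¹ * x := by
        rw [norm_mul, norm_inv, norm_pow, habsq, ← hxdef]
      have hge1 : (1:ℝ) ≤ (q^2)⁻¹ * x := by
        have : (1:ℝ) ≤ (q^2)⁻¹ := (one_le_inv₀ hq2).mpr hq2le
        nlinarith
      have hge2 : (1:ℝ) ≤ (q^4)⁻¹ * x := by
        have : (1:ℝ) ≤ (q^4)⁻¹ := (one_le_inv₀ hq4).mpr hq4le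
        nlinarith
      have IH1 := ih (m+1) (by omega) (((q:ℂ)^2)⁻¹ * t) (by rw [ht1]; exact hge1)
      have IH2 := ih m (by omega) (((q:ℂ)^4)⁻¹ * t) (by rw [ht2]; exact hge2)
      rw [ht1] at IH1
      rw [ht2] at IH2
      -- improve IH2 denominator
      have hF2pos : 0 < fb ((q^4)⁻¹ * x / K) :=
        lt_of_lt_of_le one_pos (hfb1 _ (by positivity))
      have IH2' : ‖SFun q c d m (((q:ℂ)^4)⁻¹ * t)‖
          ≤ fb ((q^4)⁻¹ * x / K) / ∏ k ∈ Finset.range (m+1), (1 - q^(k+1)) := by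
        refine IH2.trans ?_
        exact div_le_div_of_nonneg_left hF2pos.le (hA (m+1)) (hAle m)
      have hS : SFun q c d (m+2) t = ((1 - (1 + (q:ℂ)) * c (m + 1) * (q:ℂ) / t)
            * SFun q c d (m + 1) (((q:ℂ) ^ 2)⁻¹ * t)
          - (q:ℂ) ^ 5 * d (m + 1) / t ^ 2 * SFun q c d m (((q:ℂ) ^ 4)⁻¹ * t))
          / (1 - (q:ℂ) ^ (m + 2)) := rfl
      have hD : (0:ℝ) < 1 - q^(m+2) := by
        have : q^(m+2) < 1 := pow_lt_one₀ hq0.le hq1 (by omega)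
        linarith
      have hden : ‖1 - (q:ℂ)^(m+2)‖ = 1 - q^(m+2) := by
        rw [show (1:ℂ) - (q:ℂ)^(m+2) = ((1 - q^(m+2):ℝ):ℂ) by push_cast; ring,
          Complex.norm_real, Real.norm_eq_abs]
        exact abs_of_pos hD
      rw [hS, norm_div, hden]
      have hE1 : ‖1 - (1 + (q:ℂ)) * c (m + 1) * (q:ℂ) / t‖
          ≤ 1 + (1+q)*q*K/x := by
        calc ‖1 - (1 + (q:ℂ)) * c (m + 1) * (q:ℂ) / t‖
            ≤ ‖(1:ℂ)‖ + ‖(1 + (q:ℂ)) * c (m + 1) * (q:ℂ) / t‖ := by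
              simpa only using
                norm_sub_le (1:ℂ) ((1 + (q:ℂ)) * c (m + 1) * (q:ℂ) / t)
          _ ≤ 1 + (1+q)*q*K/x := by
              rw [norm_one, norm_div, norm_mul, norm_mul, habsq, habs1q, ← hxdef]
              have := hc (m+1)
              have hle : (1+q) * ‖c (m+1)‖ * q / x ≤ (1+q)*K*q/x := by
                gcongr
              linarith [hle, show (1+q)*K*q/x = (1+q)*q*K/x by ring]
      have hE2 : ‖(q:ℂ)^5 * d (m+1) / t^2‖ ≤ q^5*K^2/x^2 := by
        rw [norm_div, norm_mul, norm_pow, norm_pow, habsq, ← hxdef]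
        gcongr
        exact hd (m+1)
      set A := ∏ k ∈ Finset.range (m+1), (1 - q^(k+1)) with hAdef
      have hApos : 0 < A := hA (m+1)
      set F1 := fb ((q^2)⁻¹ * x / K) with hF1def
      set F2 := fb ((q^4)⁻¹ * x / K) with hF2def
      have hF1pos : 0 < F1 := lt_of_lt_of_le one_pos (hfb1 _ (by positivity))
      have hnum : ‖(1 - (1 + (q:ℂ)) * c (m + 1) * (q:ℂ) / t)
            * SFun q c d (m + 1) (((q:ℂ) ^ 2)⁻¹ * t)
          - (q:ℂ) ^ 5 * d (m + 1) / t ^ 2 * SFun q c d m (((q:ℂ) ^ 4)⁻¹ * t)‖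
          ≤ (1 + (1+q)*q*K/x) * (F1 / A) + (q^5*K^2/x^2) * (F2 / A) := by
        calc ‖_‖
            ≤ ‖(1 - (1 + (q:ℂ)) * c (m + 1) * (q:ℂ) / t)
                * SFun q c d (m + 1) (((q:ℂ) ^ 2)⁻¹ * t)‖
              + ‖(q:ℂ) ^ 5 * d (m + 1) / t ^ 2
                * SFun q c d m (((q:ℂ) ^ 4)⁻¹ * t)‖ := by
              simpa only using norm_sub_le
                ((1 - (1 + (q:ℂ)) * c (m + 1) * (q:ℂ) / t)
                  * SFun q c d (m + 1) (((q:ℂ) ^ 2)⁻¹ * t))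
                ((q:ℂ) ^ 5 * d (m + 1) / t ^ 2 * SFun q c d m (((q:ℂ) ^ 4)⁻¹ * t))
          _ ≤ (1 + (1+q)*q*K/x) * (F1 / A) + (q^5*K^2/x^2) * (F2 / A) := by
              rw [norm_mul, norm_mul]
              have h1 : (0:ℝ) ≤ 1 + (1+q)*q*K/x := by positivity
              have h2 : (0:ℝ) ≤ q^5*K^2/x^2 := by positivity
              refine add_le_add
                (mul_le_mul hE1 IH1 (norm_nonneg _) (by positivity))
                (mul_le_mul hE2 IH2' (norm_nonneg _) (by positivity))
      have hkey := key x hx0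
      rw [← hF1def, ← hF2def] at hkey
      have heq : (1 + (1+q)*q*K/x) * (F1 / A) + (q^5*K^2/x^2) * (F2 / A)
          = fb (x / K) / A := by
        rw [hkey]; ring
      rw [heq] at hnum
      have hprod : ∏ k ∈ Finset.range (m+2), (1 - q^(k+1)) = A * (1 - q^(m+2)) := by
        rw [hAdef, Finset.prod_range_succ]
      rw [hprod]
      rw [show fb (x / K) / (A * (1 - q^(m+2))) = (fb (x / K) / A) / (1 - q^(m+2)) by
        rw [div_div]]
      exact (div_le_div_iff_of_pos_right hD).mpr hnum
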